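/- Let S be a numerical semigroup with a unique Betti element, so that there exist pairwise relatively prime integers k_1 > k_2 > ... > k_b > 1 with minimal generators n_i = ∏_{j ≠ i} k_j. Then the Apéry set of S with respect to n_1 is exactly Ap(S) = {λ_2 n_2 + ... + λ_b n_b : 0 ≤ λ_i ≤ k_i − 1}. -/

import Mathlib

open Finset

/-- Membership in the numerical semigroup generated by `n`. -/
def memS {b : ℕ} (n : Fin b → ℕ) (s : ℕ) : Prop :=
  ∃ r : Fin b → ℕ, ∑ i, r i * n i = s

/-- The order of `s`: the largest number of generators (with repetition) summing to `s`. -/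
noncomputable def ord {b : ℕ} (n : Fin b → ℕ) (s : ℕ) : ℕ :=
  sSup {k | ∃ r : Fin b → ℕ, (∑ i, r i * n i = s) ∧ ∑ i, r i = k}

/-- `r` is a maximal expression of `s`. -/
def IsMaxExpr {b : ℕ} (n : Fin b → ℕ) (s : ℕ) (r : Fin b → ℕ) : Prop :=
  (∑ i, r i * n i = s) ∧ ∑ i, r i = ord n s

/-- `s` is a torsion element: `ord (s + c·n₁) > ord s + c` for some `c > 0`. -/
def Torsion {b : ℕ} [NeZero b] (n : Fin b → ℕ) (s : ℕ) : Prop :=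
  ∃ c, 0 < c ∧ ord n s + c < ord n (s + c * n 0)

/-- The torsion order: least `c > 0` with `ord (s + c·n₁) > ord s + c`. -/
noncomputable def tord {b : ℕ} [NeZero b] (n : Fin b → ℕ) (s : ℕ) : ℕ :=
  sInf {c | 0 < c ∧ ord n s + c < ord n (s + c * n 0)}

/-- `n` is a minimal system of generators of a numerical semigroup,
listed increasingly. -/
def MinGen {b : ℕ} (n : Fin b → ℕ) : Prop :=
  StrictMono n ∧ (∀ i, 1 < n i) ∧ Finset.univ.gcd n = 1 ∧
  ∀ i, ¬ ∃ r : Fin b → ℕ, r i = 0 ∧ ∑ j, r j * n j = n i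

/-- The Apéry set of the semigroup generated by `n` with respect to `ν`. -/
def Ap {b : ℕ} (n : Fin b → ℕ) (ν : ℕ) : Set ℕ :=
  {s | memS n s ∧ ¬ ∃ t, memS n t ∧ t + ν = s}

/-- The `k`-fold sumset `kM` of the maximal ideal `M = S \ {0}`:
the elements of order at least `k`. -/
def powM {b : ℕ} (n : Fin b → ℕ) (k : ℕ) : Set ℕ :=
  {s | ∃ r : Fin b → ℕ, k ≤ ∑ i, r i ∧ ∑ i, r i * n i = s}

/-- The reduction number: least `r` with `(r+1)M = n₁ + rM`. -/
noncomputable def redNum {b : ℕ} [NeZero b] (n : Fin b → ℕ) : ℕ :=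
  sInf {r | powM n (r + 1) = (fun t => n 0 + t) '' powM n r}

section Aux

variable {b : ℕ} {k n : Fin b → ℕ}

lemma aux_dvd (hn : ∀ i, n i = ∏ j ∈ Finset.univ.erase i, k j) {i j : Fin b}
    (h : i ≠ j) : k i ∣ n j := by
  rw [hn j]
  exact Finset.dvd_prod_of_mem _ (Finset.mem_erase.2 ⟨h, Finset.mem_univ i⟩)

lemma aux_cop (hcop : ∀ i j, i ≠ j → Nat.Coprime (k i) (k j))
    (hn : ∀ i, n i = ∏ j ∈ Finset.univ.erase i, k j) (i : Fin b) :
    Nat.Coprime (k i) (n i) := by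
  rw [hn i]
  exact Nat.Coprime.prod_right fun j hj => hcop i j (Finset.ne_of_mem_erase hj).symm

lemma aux_npos (hk : ∀ i, 1 < k i)
    (hn : ∀ i, n i = ∏ j ∈ Finset.univ.erase i, k j) (i : Fin b) : 0 < n i := by
  rw [hn i]
  exact Finset.prod_pos fun j _ => Nat.lt_of_lt_of_le Nat.zero_lt_one (hk j).le

lemma sum_modEq (j : Fin b) (hdvd : ∀ i, i ≠ j → k j ∣ n i) (x : Fin b → ℕ) :
    (∑ i, x i * n i) ≡ x j * n j [MOD k j] := by
  rw [← Finset.add_sum_erase _ _ (Finset.mem_univ j)]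
  obtain ⟨m, hm⟩ : k j ∣ ∑ i ∈ Finset.univ.erase j, x i * n i :=
    Finset.dvd_sum fun i hi => (hdvd i (Finset.ne_of_mem_erase hi)).mul_left _
  rw [hm]
  show (x j * n j + k j * m) % k j = (x j * n j) % k j
  exact Nat.add_mul_mod_self_left _ _ _

/-- Part A: box elements are in the Apéry set. -/
lemma box_mem_Ap [NeZero b] (hk : ∀ i, 1 < k i)
    (hcop : ∀ i j, i ≠ j → Nat.Coprime (k i) (k j))
    (hn : ∀ i, n i = ∏ j ∈ Finset.univ.erase i, k j)
    (lam : Fin b → ℕ) (h0 : lam 0 = 0) (hlam : ∀ i, lam i ≤ k i - 1) :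
    (∑ i, lam i * n i) ∈ Ap n (n 0) := by
  refine ⟨⟨lam, rfl⟩, ?_⟩
  rintro ⟨t, ⟨r, hr⟩, ht⟩
  rw [← hr] at ht
  -- ht : ∑ r i * n i + n 0 = ∑ lam i * n i
  have key : ∀ j : Fin b, j ≠ 0 → lam j ≤ r j := by
    intro j hj
    have hdvd : ∀ i, i ≠ j → k j ∣ n i := fun i hi => aux_dvd hn hi.symm
    have h1 : (∑ i, r i * n i + n 0) ≡ (r j * n j + 0) [MOD k j] :=
      (sum_modEq j hdvd r).add ((Nat.modEq_zero_iff_dvd).2 (aux_dvd hn hj))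
    have h2 : (∑ i, lam i * n i) ≡ lam j * n j [MOD k j] := sum_modEq j hdvd lam
    rw [ht] at h1
    have h3 : r j * n j ≡ lam j * n j [MOD k j] := by
      simpa using h1.symm.trans h2
    have h4 : r j ≡ lam j [MOD k j] :=
      Nat.ModEq.cancel_right_of_coprime (aux_cop hcop hn j) h3
    have h5 : lam j < k j := lt_of_le_of_lt (hlam j) (Nat.sub_lt (Nat.lt_of_lt_of_le Nat.zero_lt_one (hk j).le) Nat.one_pos)
    calc lam j = lam j % k j := (Nat.mod_eq_of_lt h5).symm
      _ = r j % k j := h4.symm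
      _ ≤ r j := Nat.mod_le _ _
  have hle : (∑ i, lam i * n i) ≤ ∑ i, r i * n i := by
    refine Finset.sum_le_sum fun i _ => ?_
    by_cases hi : i = 0
    · simp [hi, h0]
    · exact Nat.mul_le_mul_right _ (key i hi)
  have := aux_npos hk hn (0 : Fin b)
  omega

lemma memS_add_mul [NeZero b] {s : ℕ} (h : memS n s) (c : ℕ) :
    memS n (s + c * n 0) := by
  obtain ⟨r, hr⟩ := h
  refine ⟨fun i => r i + if i = 0 then c else 0, ?_⟩
  simp only [add_mul, Finset.sum_add_distrib, hr, ite_mul, zero_mul]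
  rw [Finset.sum_ite_eq' Finset.univ (0 : Fin b) (fun i => c * n i)]
  simp

lemma Ap_unique [NeZero b] {s w : ℕ} (hpos : 0 < n 0)
    (hs : s ∈ Ap n (n 0)) (hw : w ∈ Ap n (n 0)) (h : s ≡ w [MOD n 0]) : s = w := by
  rcases le_total s w with hle | hle
  · obtain ⟨m, hm⟩ := (Nat.modEq_iff_dvd' hle).1 h
    rcases m with _ | m
    · omega
    · exfalso
      apply hw.2
      refine ⟨s + m * n 0, memS_add_mul hs.1 _, ?_⟩
      have hw' : w = s + n 0 * (m + 1) := by omega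
      rw [hw']; ring
  · obtain ⟨m, hm⟩ := (Nat.modEq_iff_dvd' hle).1 h.symm
    rcases m with _ | m
    · omega
    · exfalso
      apply hs.2
      refine ⟨w + m * n 0, memS_add_mul hw.1 _, ?_⟩
      have hs' : s = w + n 0 * (m + 1) := by omega
      rw [hs']; ring

end Aux

theorem stmt10 {b : ℕ} [NeZero b] (hb : 2 ≤ b) (k n : Fin b → ℕ)
    (hk : ∀ i, 1 < k i) (hanti : StrictAnti k)
    (hcop : ∀ i j, i ≠ j → Nat.Coprime (k i) (k j))
    (hn : ∀ i, n i = ∏ j ∈ Finset.univ.erase i, k j) :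
    Ap n (n 0) = {s | ∃ lam : Fin b → ℕ, lam 0 = 0 ∧
      (∀ i, lam i ≤ k i - 1) ∧ s = ∑ i, lam i * n i} := by
  have hpos := aux_npos hk hn (0 : Fin b)
  ext s
  constructor
  · intro hs
    -- construct lam via CRT
    have hinv : ∀ j : Fin b, j ≠ 0 → ∃ u, n j * u % k j = 1 := fun j _ =>
      (Nat.exists_mul_mod_eq_one_of_coprime ((aux_cop hcop hn j).symm) (hk j)).imp fun _ h => h.2
    choose u hu using fun j (hj : j ≠ (0 : Fin b)) => hinv j hj
    classical
    set lam : Fin b → ℕ := fun j => if hj : j = 0 then 0 else (s * u j hj) % k j with hlamdef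
    have h0 : lam 0 = 0 := by simp [hlamdef]
    have hlt : ∀ i, lam i ≤ k i - 1 := by
      intro i
      by_cases hi : i = 0
      · simp [hlamdef, hi]
      · have : lam i < k i := by
          simp only [hlamdef, hi, dif_neg]
          exact Nat.mod_lt _ (by have := hk i; omega)
        omega
    set w := ∑ i, lam i * n i with hwdef
    have hwAp : w ∈ Ap n (n 0) := box_mem_Ap hk hcop hn lam h0 hlt
    -- s ≡ w mod each k j, j ≠ 0
    have hmod : ∀ j : Fin b, j ≠ 0 → s ≡ w [MOD k j] := by
      intro j hj
      have h2 : w ≡ lam j * n j [MOD k j] :=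
        sum_modEq j (fun i hi => aux_dvd hn hi.symm) lam
      have h3 : lam j * n j ≡ s [MOD k j] := by
        have hl : lam j = (s * u j hj) % k j := by simp [hlamdef, hj]
        calc lam j * n j ≡ (s * u j hj) * n j [MOD k j] := by
              rw [hl]; exact (Nat.mod_modEq _ _).mul_right _
          _ = s * (n j * u j hj) := by ring
          _ ≡ s * 1 [MOD k j] := by
              exact Nat.ModEq.mul_left s ((Nat.mod_modEq _ _).symm.trans (by rw [hu j hj]))
          _ = s := by ring
      exact (h2.trans h3).symm
    -- combine: s ≡ w mod n 0
    have hcomb : s ≡ w [MOD n 0] := by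
      rw [Nat.modEq_iff_dvd]
      have : ∀ j ∈ Finset.univ.erase (0 : Fin b), ((k j : ℤ)) ∣ (w : ℤ) - (s : ℤ) := by
        intro j hj
        exact Nat.modEq_iff_dvd.1 (hmod j (Finset.ne_of_mem_erase hj))
      have hpair : (↑(Finset.univ.erase (0 : Fin b)) : Set (Fin b)).Pairwise
          (Function.onFun IsCoprime fun j => (k j : ℤ)) := by
        intro i hi j hj hij
        exact Nat.isCoprime_iff_coprime.2 (hcop i j hij)
      have hdvd := Finset.prod_dvd_of_coprime hpair this
      rw [hn 0]
      push_cast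
      exact hdvd
    exact ⟨lam, h0, hlt, Ap_unique hpos hs hwAp hcomb⟩
  · rintro ⟨lam, h0, hlam, rfl⟩
    exact box_mem_Ap hk hcop hn lam h0 hlam
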